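/- Under the hypotheses giving summability of successive differences (g : [0,∞) → [0,∞) continuous, concave, increasing; f ≥ 0 differentiable with L(f)-Lipschitz gradient; F(X) = Σ_{i=1}^m g(σ_i(X)) + f(X); μ > L(f); each L^{k+1} a global minimizer of the linearized proximal surrogate with supergradient weights), the successive differences converge to zero: ‖L^k − L^{k+1}‖_F → 0 as k → ∞. -/

import Mathlib

attribute [local instance] Matrix.frobeniusSeminormedAddCommGroup
  Matrix.frobeniusNormedAddCommGroup Matrix.frobeniusNormedSpace

/-- Squared Frobenius norm of a real matrix. -/
noncomputable def frobNormSq {m n : ℕ} (A : Matrix (Fin m) (Fin n) ℝ) : ℝ :=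
  ∑ i, ∑ j, (A i j) ^ 2

/-- Frobenius norm of a real matrix. -/
noncomputable def frobNorm {m n : ℕ} (A : Matrix (Fin m) (Fin n) ℝ) : ℝ :=
  Real.sqrt (frobNormSq A)

/-- The Frobenius inner product `⟨A, B⟩ = Σᵢⱼ Aᵢⱼ·Bᵢⱼ`. -/
noncomputable def frobInner {m n : ℕ} (A B : Matrix (Fin m) (Fin n) ℝ) : ℝ :=
  ∑ i, ∑ j, A i j * B i j

/-- The Frobenius inner product with a fixed matrix `G`, as a continuous linear map. -/
noncomputable def frobInnerCLM {m n : ℕ} (G : Matrix (Fin m) (Fin n) ℝ) :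
    Matrix (Fin m) (Fin n) ℝ →L[ℝ] ℝ :=
  LinearMap.toContinuousLinearMap
    { toFun := fun H => frobInner G H
      map_add' := by
        intro A B
        simp [frobInner, Matrix.add_apply, mul_add, Finset.sum_add_distrib]
      map_smul' := by
        intro c A
        simp [frobInner, Matrix.smul_apply, Finset.mul_sum, mul_comm, mul_left_comm,
          smul_eq_mul] }

/-- The singular values of a real `m × n` matrix `A`, arranged in nonincreasing order:
the square roots of the eigenvalues of `A * Aᵀ`, sorted in nonincreasing order. -/
noncomputable def singularValues {m n : ℕ} (A : Matrix (Fin m) (Fin n) ℝ) :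
    Fin (min m n) → ℝ := fun i =>
  Real.sqrt
    ((Matrix.isHermitian_mul_conjTranspose_self A).eigenvalues
      (Tuple.sort (fun j => -(Matrix.isHermitian_mul_conjTranspose_self A).eigenvalues j)
        (Fin.castLE (min_le_left m n) i)))


lemma frobNormSq_nonneg {m n : ℕ} (A : Matrix (Fin m) (Fin n) ℝ) : 0 ≤ frobNormSq A :=
  Finset.sum_nonneg fun _ _ => Finset.sum_nonneg fun _ _ => sq_nonneg _

lemma frobInner_le {m n : ℕ} (A B : Matrix (Fin m) (Fin n) ℝ) :
    frobInner A B ≤ frobNorm A * frobNorm B := by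
  have h := Real.sum_mul_le_sqrt_mul_sqrt (Finset.univ : Finset (Fin m × Fin n))
    (fun p => A p.1 p.2) (fun p => B p.1 p.2)
  simpa [frobInner, frobNorm, frobNormSq, Fintype.sum_prod_type] using h

lemma frobInner_sub_left {m n : ℕ} (A B C : Matrix (Fin m) (Fin n) ℝ) :
    frobInner (A - B) C = frobInner A C - frobInner B C := by
  simp [frobInner, Matrix.sub_apply, sub_mul, Finset.sum_sub_distrib]

lemma frobNormSq_sub_comm {m n : ℕ} (A B : Matrix (Fin m) (Fin n) ℝ) :
    frobNormSq (A - B) = frobNormSq (B - A) := by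
  simp only [frobNormSq, Matrix.sub_apply]
  exact Finset.sum_congr rfl fun i _ => Finset.sum_congr rfl fun j _ => by ring

lemma frobNorm_smul {m n : ℕ} (t : ℝ) (ht : 0 ≤ t) (A : Matrix (Fin m) (Fin n) ℝ) :
    frobNorm (t • A) = t * frobNorm A := by
  have : frobNormSq (t • A) = t ^ 2 * frobNormSq A := by
    simp [frobNormSq, Matrix.smul_apply, smul_eq_mul, mul_pow, Finset.mul_sum]
  rw [frobNorm, this, Real.sqrt_mul (sq_nonneg t), Real.sqrt_sq ht, frobNorm]

lemma frobNorm_mul_self {m n : ℕ} (A : Matrix (Fin m) (Fin n) ℝ) :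
    frobNorm A * frobNorm A = frobNormSq A :=
  Real.mul_self_sqrt (frobNormSq_nonneg A)

lemma descent_lemma {m n : ℕ}
    (f : Matrix (Fin m) (Fin n) ℝ → ℝ)
    (gradf : Matrix (Fin m) (Fin n) ℝ → Matrix (Fin m) (Fin n) ℝ) (Lf : ℝ)
    (hdiff : ∀ X, HasFDerivAt f (frobInnerCLM (gradf X)) X)
    (hLip : ∀ X Y, frobNorm (gradf X - gradf Y) ≤ Lf * frobNorm (X - Y))
    (X Y : Matrix (Fin m) (Fin n) ℝ) :
    f Y ≤ f X + frobInner (gradf X) (Y - X) + Lf / 2 * frobNormSq (Y - X) := by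
  set d := Y - X with hd
  set φ : ℝ → ℝ := fun t =>
    f (X + t • d) - t * frobInner (gradf X) d - Lf / 2 * t ^ 2 * frobNormSq d with hφ
  have hderiv : ∀ t : ℝ, HasDerivAt φ
      (frobInner (gradf (X + t • d)) d - frobInner (gradf X) d - Lf * t * frobNormSq d) t := by
    intro t
    have hc : HasDerivAt (fun t : ℝ => X + t • d) d t := by
      have h := ((hasDerivAt_id' t).smul_const d).const_add X
      simp only [one_smul] at h
      exact h
    have h1 : HasDerivAt (fun t : ℝ => f (X + t • d)) (frobInner (gradf (X + t • d)) d) t :=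
      by
        have h := (hdiff (X + t • d)).comp_hasDerivAt t hc
        exact h
    have h2 : HasDerivAt (fun t : ℝ => t * frobInner (gradf X) d)
        (frobInner (gradf X) d) t := by
      simpa using (hasDerivAt_id t).mul_const (frobInner (gradf X) d)
    have h3 : HasDerivAt (fun t : ℝ => Lf / 2 * t ^ 2 * frobNormSq d)
        (Lf * t * frobNormSq d) t := by
      have h := (hasDerivAt_pow 2 t).const_mul (Lf / 2 * frobNormSq d)
      have heq : (fun s : ℝ => Lf / 2 * frobNormSq d * s ^ 2)
          = fun s : ℝ => Lf / 2 * s ^ 2 * frobNormSq d := by funext s; ring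
      rw [heq] at h
      convert h using 1
      · rfl
      · rfl
      rw [show (2:ℕ) - 1 = 1 from rfl]; push_cast; ring
    exact (h1.sub h2).sub h3
  have hanti : AntitoneOn φ (Set.Icc 0 1) := by
    apply antitoneOn_of_deriv_nonpos (convex_Icc 0 1)
    · exact (Differentiable.continuous fun s => (hderiv s).differentiableAt).continuousOn
    · intro t _
      exact (hderiv t).differentiableAt.differentiableWithinAt
    · intro t ht
      rw [interior_Icc] at ht
      rw [(hderiv t).deriv]
      have hsub : frobInner (gradf (X + t • d)) d - frobInner (gradf X) d
          = frobInner (gradf (X + t • d) - gradf X) d := (frobInner_sub_left _ _ _).symm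
      have h1 : frobInner (gradf (X + t • d) - gradf X) d
          ≤ frobNorm (gradf (X + t • d) - gradf X) * frobNorm d := frobInner_le _ _
      have h2 : frobNorm (gradf (X + t • d) - gradf X) ≤ Lf * (t * frobNorm d) := by
        have := hLip (X + t • d) X
        simpa [add_sub_cancel_left, frobNorm_smul t ht.1.le] using this
      have h3 : frobNorm (gradf (X + t • d) - gradf X) * frobNorm d
          ≤ Lf * (t * frobNorm d) * frobNorm d :=
        mul_le_mul_of_nonneg_right h2 (Real.sqrt_nonneg _)
      have h4 : Lf * (t * frobNorm d) * frobNorm d = Lf * t * frobNormSq d := by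
        rw [← frobNorm_mul_self d]; ring
      nlinarith [h1, h3]
  have key : φ 1 ≤ φ 0 :=
    hanti (Set.left_mem_Icc.2 zero_le_one) (Set.right_mem_Icc.2 zero_le_one) zero_le_one
  have e0 : φ 0 = f X := by simp [hφ]
  have e1 : φ 1 = f Y - frobInner (gradf X) d - Lf / 2 * frobNormSq d := by
    simp [hφ, hd]
  rw [e0, e1] at key
  linarith

/-- Under the hypotheses giving summability of successive differences, the successive
differences of the proximal iteratively reweighted iterates converge to zero:
`‖L^k − L^{k+1}‖_F → 0` as `k → ∞`. -/

theorem pira_successive_differences_tendsto_zero {m n : ℕ} (hmn : m ≤ n)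
    (g : ℝ → ℝ)
    (hg_nonneg : ∀ t, 0 ≤ t → 0 ≤ g t)
    (hg_cont : ContinuousOn g (Set.Ici 0))
    (hg_concave : ConcaveOn ℝ (Set.Ici 0) g)
    (hg_mono : MonotoneOn g (Set.Ici 0))
    (f : Matrix (Fin m) (Fin n) ℝ → ℝ)
    (gradf : Matrix (Fin m) (Fin n) ℝ → Matrix (Fin m) (Fin n) ℝ)
    (Lf : ℝ)
    (hdiff : ∀ X, HasFDerivAt f (frobInnerCLM (gradf X)) X)
    (hLip : ∀ X Y, frobNorm (gradf X - gradf Y) ≤ Lf * frobNorm (X - Y))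
    (hf_nonneg : ∀ X, 0 ≤ f X)
    (F : Matrix (Fin m) (Fin n) ℝ → ℝ)
    (hF : ∀ X, F X = (∑ i, g (singularValues X i)) + f X)
    (μ : ℝ) (hμ : Lf < μ)
    (L : ℕ → Matrix (Fin m) (Fin n) ℝ)
    (hstep : ∀ k : ℕ, ∃ w : Fin (min m n) → ℝ,
      (∀ i, 0 ≤ w i) ∧
      (∀ i, ∀ t : ℝ, 0 ≤ t →
        g t ≤ g (singularValues (L k) i) + w i * (t - singularValues (L k) i)) ∧
      (∀ X : Matrix (Fin m) (Fin n) ℝ,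
        (∑ i, w i * singularValues (L (k + 1)) i)
            + frobInner (gradf (L k)) (L (k + 1) - L k)
            + (μ / 2) * frobNormSq (L (k + 1) - L k)
          ≤ (∑ i, w i * singularValues X i)
            + frobInner (gradf (L k)) (X - L k)
            + (μ / 2) * frobNormSq (X - L k))) :
    Filter.Tendsto (fun k : ℕ => frobNorm (L k - L (k + 1))) Filter.atTop (nhds 0) := by
  have hσ : ∀ (X : Matrix (Fin m) (Fin n) ℝ) i, 0 ≤ singularValues X i :=
    fun X i => Real.sqrt_nonneg _
  have key : ∀ k, F (L (k + 1)) + (μ - Lf) / 2 * frobNormSq (L (k + 1) - L k) ≤ F (L k) := by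
    intro k
    obtain ⟨w, hw0, hsup, hmin⟩ := hstep k
    have hz1 : frobInner (gradf (L k)) (L k - L k) = 0 := by
      simp [frobInner, Matrix.sub_apply, sub_self]
    have hz2 : frobNormSq (L k - L k) = (0 : ℝ) := by
      simp [frobNormSq, Matrix.sub_apply, sub_self]
    have h1 : (∑ i, w i * singularValues (L (k + 1)) i)
        + frobInner (gradf (L k)) (L (k + 1) - L k)
        + μ / 2 * frobNormSq (L (k + 1) - L k)
        ≤ ∑ i, w i * singularValues (L k) i := by
      have h := hmin (L k)
      rw [hz1, hz2] at h
      simpa using h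
    have h2 := descent_lemma f gradf Lf hdiff hLip (L k) (L (k + 1))
    have h3 : ∑ i, g (singularValues (L (k + 1)) i)
        ≤ (∑ i, g (singularValues (L k) i))
          + ((∑ i, w i * singularValues (L (k + 1)) i)
            - ∑ i, w i * singularValues (L k) i) := by
      have := Finset.sum_le_sum (s := Finset.univ)
        (f := fun i => g (singularValues (L (k + 1)) i))
        (g := fun i => g (singularValues (L k) i)
          + w i * (singularValues (L (k + 1)) i - singularValues (L k) i))
        (fun i _ => hsup i _ (hσ _ i))
      simpa [Finset.sum_add_distrib, mul_sub, Finset.sum_sub_distrib] using this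
    rw [hF (L (k + 1)), hF (L k)]
    linarith
  have hF0 : ∀ k, 0 ≤ F (L k) := fun k => by
    rw [hF]
    exact add_nonneg (Finset.sum_nonneg fun i _ => hg_nonneg _ (hσ _ i)) (hf_nonneg _)
  have hmono : Antitone fun k => F (L k) := antitone_nat_of_succ_le fun k => by
    have h := key k
    have h0 : 0 ≤ (μ - Lf) / 2 * frobNormSq (L (k + 1) - L k) :=
      mul_nonneg (by linarith) (frobNormSq_nonneg _)
    linarith
  have hbdd : BddBelow (Set.range fun k => F (L k)) :=
    ⟨0, by rintro x ⟨k, rfl⟩; exact hF0 k⟩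
  have hlim := tendsto_atTop_ciInf hmono hbdd
  have hlim' : Filter.Tendsto (fun k => F (L (k + 1))) Filter.atTop
      (nhds (⨅ k, F (L k))) := hlim.comp (Filter.tendsto_add_atTop_nat 1)
  have hdiff0 : Filter.Tendsto (fun k => F (L k) - F (L (k + 1))) Filter.atTop (nhds 0) := by
    simpa using hlim.sub hlim'
  have hne : μ - Lf ≠ 0 := ne_of_gt (by linarith)
  have hQ : Filter.Tendsto (fun k => frobNormSq (L (k + 1) - L k)) Filter.atTop (nhds 0) := by
    apply squeeze_zero (g := fun k => (F (L k) - F (L (k + 1))) * (2 / (μ - Lf)))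
      (fun k => frobNormSq_nonneg _)
    · intro k
      have h := key k
      have hle : (μ - Lf) / 2 * frobNormSq (L (k + 1) - L k)
          ≤ F (L k) - F (L (k + 1)) := by linarith
      calc frobNormSq (L (k + 1) - L k)
          = ((μ - Lf) / 2 * frobNormSq (L (k + 1) - L k)) * (2 / (μ - Lf)) := by
            field_simp
        _ ≤ (F (L k) - F (L (k + 1))) * (2 / (μ - Lf)) :=
            mul_le_mul_of_nonneg_right hle (div_nonneg (by norm_num) (by linarith))
    · simpa using hdiff0.mul_const (2 / (μ - Lf))
  have hQ' : Filter.Tendsto (fun k => frobNormSq (L k - L (k + 1))) Filter.atTop (nhds 0) := by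
    have heq : (fun k => frobNormSq (L k - L (k + 1)))
        = fun k => frobNormSq (L (k + 1) - L k) :=
      funext fun k => frobNormSq_sub_comm _ _
    rw [heq]; exact hQ
  have := (Real.continuous_sqrt.tendsto 0).comp hQ'
  rw [Real.sqrt_zero] at this
  exact this
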